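/- Let N ≥ 1, κ ≥ 0, and let ã be a bilinear form on ℝ^N satisfying ã(v,v) ≥ c‖v‖² for all v (with c > 0) and |ã(v,w)| ≤ M‖v‖‖w‖ for all v, w (with M ≥ 0), where ‖·‖ is the Euclidean norm. Let d ∈ ℝ^N have entries dᵢ ≥ σ with σ > M²/(2c), and define s(v,w) = Σᵢ dᵢ vᵢ wᵢ. Then there exists a constant C > 0 such that for all v, w ∈ ℝ^N, ã(v⁺ − w⁺, v − w) + s(v⁻ − w⁻, v − w) ≥ C‖v − w‖². -/

import Mathlib

open scoped BigOperators

/-- Componentwise clipping to `[0, κ]` on Euclidean space. -/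
noncomputable def clipE {N : ℕ} (κ : ℝ) (v : EuclideanSpace ℝ (Fin N)) :
    EuclideanSpace ℝ (Fin N) :=
  WithLp.toLp 2 (fun i => max 0 (min (v i) κ))

/-- Variational inequality for projection onto `[0, κ]`. -/
lemma clip_vi (κ x z : ℝ) (hκ : 0 ≤ κ) (hz0 : 0 ≤ z) (hzκ : z ≤ κ) :
    (x - max 0 (min x κ)) * (z - max 0 (min x κ)) ≤ 0 := by
  rcases le_total x 0 with h | h
  · rw [min_eq_left (h.trans hκ), max_eq_left h]
    nlinarith
  · rcases le_total x κ with h2 | h2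
    · rw [min_eq_left h2, max_eq_right h]
      simp
    · rw [min_eq_right h2, max_eq_right hκ]
      nlinarith

lemma clip_key (κ x y : ℝ) (hκ : 0 ≤ κ) :
    0 ≤ ((x - max 0 (min x κ)) - (y - max 0 (min y κ)))
        * (max 0 (min x κ) - max 0 (min y κ)) := by
  have hy0 : 0 ≤ max 0 (min y κ) := le_max_left _ _
  have hyκ : max 0 (min y κ) ≤ κ := max_le hκ (min_le_right _ _)
  have hx0 : 0 ≤ max 0 (min x κ) := le_max_left _ _
  have hxκ : max 0 (min x κ) ≤ κ := max_le hκ (min_le_right _ _)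
  have h1 := clip_vi κ x (max 0 (min y κ)) hκ hy0 hyκ
  have h2 := clip_vi κ y (max 0 (min x κ)) hκ hx0 hxκ
  nlinarith

set_option maxHeartbeats 1000000 in
theorem clipped_strong_monotone (N : ℕ) (hN : 1 ≤ N) (κ : ℝ) (hκ : 0 ≤ κ)
    (A : EuclideanSpace ℝ (Fin N) →ₗ[ℝ] EuclideanSpace ℝ (Fin N) →ₗ[ℝ] ℝ)
    (c M : ℝ) (hc : 0 < c) (hM : 0 ≤ M)
    (hcoer : ∀ v : EuclideanSpace ℝ (Fin N), c * ‖v‖ ^ 2 ≤ A v v)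
    (hbound : ∀ v w : EuclideanSpace ℝ (Fin N), |A v w| ≤ M * ‖v‖ * ‖w‖)
    (d : Fin N → ℝ) (σ : ℝ) (hσ : M ^ 2 / (2 * c) < σ) (hd : ∀ i, σ ≤ d i)
    (s : EuclideanSpace ℝ (Fin N) → EuclideanSpace ℝ (Fin N) → ℝ)
    (hs : ∀ v w : EuclideanSpace ℝ (Fin N), s v w = ∑ i, d i * v i * w i) :
    ∃ C : ℝ, 0 < C ∧ ∀ v w : EuclideanSpace ℝ (Fin N),
      C * ‖v - w‖ ^ 2 ≤
        A (clipE κ v - clipE κ w) (v - w)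
          + s ((v - clipE κ v) - (w - clipE κ w)) (v - w) := by
  set δ : ℝ := M ^ 2 / (2 * c) with hδdef
  have hδc : 2 * c * δ = M ^ 2 := by rw [hδdef]; field_simp
  have hδ0 : 0 ≤ δ := by positivity
  have hσ0 : 0 < σ := lt_of_le_of_lt hδ0 hσ
  set ε : ℝ := min (c / 2) (σ - δ) with hεdef
  have hε0 : 0 < ε := lt_min (by linarith) (by linarith)
  have hε1 : ε ≤ c / 2 := min_le_left _ _
  have hε2 : ε ≤ σ - δ := min_le_right _ _
  refine ⟨ε / 2, by positivity, ?_⟩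
  intro v w
  set p : EuclideanSpace ℝ (Fin N) := clipE κ v - clipE κ w with hp
  set u : EuclideanSpace ℝ (Fin N) := v - w with hu
  set q : EuclideanSpace ℝ (Fin N) := u - p with hq
  have hqeq : (v - clipE κ v) - (w - clipE κ w) = q := by
    rw [hq, hu, hp]; abel
  have hupq : u = p + q := by rw [hq]; abel
  have hnorm : ∀ z : EuclideanSpace ℝ (Fin N), ‖z‖ ^ 2 = ∑ i, (z i) ^ 2 := by
    intro z
    rw [EuclideanSpace.norm_eq, Real.sq_sqrt (by positivity)]
    simp [Real.norm_eq_abs, sq_abs]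
  -- componentwise facts
  have hcomp : ∀ i, (q i) ^ 2 ≤ q i * u i := by
    intro i
    have hqi : q i = (v i - max 0 (min (v i) κ)) - (w i - max 0 (min (w i) κ)) := by
      rw [hq, hu, hp]; simp only [PiLp.sub_apply, clipE, PiLp.toLp_apply]
      ring
    have hui : u i = v i - w i := by simp [hu]
    have := clip_key κ (v i) (w i) hκ
    rw [hqi, hui]
    nlinarith
  -- bound on s
  have hsq : σ * ‖q‖ ^ 2 ≤ s q u := by
    rw [hs, hnorm, Finset.mul_sum]
    apply Finset.sum_le_sum
    intro i _
    have h1 := hcomp i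
    have h2 : 0 ≤ q i * u i := le_trans (sq_nonneg _) h1
    have h3 := hd i
    nlinarith
  -- bound on A
  have hApp : c * ‖p‖ ^ 2 ≤ A p p := hcoer p
  have hApq : -(M * ‖p‖ * ‖q‖) ≤ A p q := neg_le_of_abs_le (hbound p q)
  have hApu : A p u = A p p + A p q := by rw [hupq, map_add]
  -- abbreviations
  set a : ℝ := ‖p‖ with ha
  set b : ℝ := ‖q‖ with hb
  have ha0 : 0 ≤ a := norm_nonneg _
  have hb0 : 0 ≤ b := norm_nonneg _
  have hMab : M * a * b ≤ c / 2 * a ^ 2 + δ * b ^ 2 := by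
    nlinarith [sq_nonneg (c * a - M * b), hc.le]
  have htri : ‖u‖ ≤ a + b := by rw [hupq]; exact norm_add_le _ _
  have hnu0 : 0 ≤ ‖u‖ := norm_nonneg _
  have h1 : c * a ^ 2 - M * a * b + σ * b ^ 2 ≤ A p u + s q u := by
    rw [hApu]; linarith
  have h2 : ε * (a ^ 2 + b ^ 2) ≤ c * a ^ 2 - M * a * b + σ * b ^ 2 := by
    have e1 := mul_le_mul_of_nonneg_right hε1 (sq_nonneg a)
    have e2 := mul_le_mul_of_nonneg_right hε2 (sq_nonneg b)
    have e2' : (σ - δ) * b ^ 2 = σ * b ^ 2 - δ * b ^ 2 := sub_mul _ _ _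
    rw [mul_add]
    linarith
  have h3 : ε / 2 * ‖u‖ ^ 2 ≤ ε * (a ^ 2 + b ^ 2) := by
    have hsq' : ‖u‖ ^ 2 ≤ (a + b) ^ 2 := pow_le_pow_left₀ hnu0 htri 2
    have hab : (a + b) ^ 2 ≤ 2 * (a ^ 2 + b ^ 2) := by nlinarith [sq_nonneg (a - b)]
    have h5 : ‖u‖ ^ 2 ≤ 2 * (a ^ 2 + b ^ 2) := hsq'.trans hab
    have h6 := mul_le_mul_of_nonneg_left h5 (by positivity : (0:ℝ) ≤ ε / 2)
    linarith
  calc ε / 2 * ‖v - w‖ ^ 2 = ε / 2 * ‖u‖ ^ 2 := by rw [hu]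
    _ ≤ A p u + s q u := by linarith
    _ = A (clipE κ v - clipE κ w) (v - w)
          + s ((v - clipE κ v) - (w - clipE κ w)) (v - w) := by rw [hqeq, hp, hu]
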